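/- Let (c_n)_{n≥1} be a sequence of complex numbers such that Σ_{n=1}^∞ 2^{v(n)}·|c_n| < ∞, where v(n) denotes the number of distinct prime divisors of n, and define b_n = Σ_{k=1}^∞ c_{k·n} for each n ≥ 1. Then for every n ≥ 1 the series Σ_{k=1}^∞ μ(k)·b_{k·n} converges and c_n = Σ_{k=1}^∞ μ(k)·b_{k·n}. -/

import Mathlib

open Filter ArithmeticFunction

lemma aux_sum_moebius (m : ℕ) :
    ∑ d ∈ m.divisors, ((moebius d : ℤ) : ℂ) = if m = 1 then 1 else 0 := by
  have h : ((moebius : ArithmeticFunction ℤ) * zeta : ArithmeticFunction ℂ) m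
      = (1 : ArithmeticFunction ℂ) m := by rw [coe_moebius_mul_coe_zeta]
  rw [coe_mul_zeta_apply, ArithmeticFunction.one_apply] at h
  simp only [intCoe_apply] at h
  exact h

lemma aux_card (m : ℕ) (hm : m ≠ 0) :
    ∑ d ∈ m.divisors, ‖((moebius d : ℤ) : ℂ)‖ = 2 ^ (cardDistinctFactors m) := by
  have : ∀ d ∈ m.divisors, ‖((moebius d : ℤ) : ℂ)‖ = if Squarefree d then (1:ℝ) else 0 := by
    intro d _
    by_cases h : Squarefree d
    · rw [moebius_apply_of_squarefree h]
      simp [h]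
    · rw [moebius_eq_zero_of_not_squarefree h]
      simp [h]
  rw [Finset.sum_congr rfl this, ← Finset.sum_filter]
  rw [Nat.sum_divisors_filter_squarefree hm]
  simp only [Finset.sum_const, nsmul_eq_mul, mul_one, Finset.card_powerset]
  rw [Nat.factors_eq m]
  have h2 : ((m.primeFactorsList : Multiset ℕ)).toFinset = m.primeFactorsList.toFinset := rfl
  rw [h2, List.card_toFinset, cardDistinctFactors_apply]
  push_cast
  ring

lemma aux_filter_subset (m N : ℕ) (hm : m ≠ 0) :
    (Finset.Icc 1 N).filter (· ∣ m) ⊆ m.divisors := by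
  intro k hk
  simp only [Finset.mem_filter, Finset.mem_Icc] at hk
  exact Nat.mem_divisors.mpr ⟨hk.2, hm⟩

lemma aux_filter_eq (m N : ℕ) (hm : m ≠ 0) (hN : m ≤ N) :
    (Finset.Icc 1 N).filter (· ∣ m) = m.divisors := by
  refine Finset.Subset.antisymm (aux_filter_subset m N hm) ?_
  intro k hk
  rw [Nat.mem_divisors] at hk
  have hk1 : 1 ≤ k := Nat.pos_of_ne_zero fun h => hm (Nat.eq_zero_of_zero_dvd (h ▸ hk.1))
  have hk2 : k ≤ N := le_trans (Nat.le_of_dvd (Nat.pos_of_ne_zero hm) hk.1) hN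
  simp [Finset.mem_filter, Finset.mem_Icc, hk1, hk2, hk.1]

lemma aux_omega_mono {a b : ℕ} (h : a ∣ b) (hb : b ≠ 0) :
    cardDistinctFactors a ≤ cardDistinctFactors b := by
  have := Nat.primeFactors_mono h hb
  have h1 : cardDistinctFactors a = a.primeFactors.card := by
    rw [cardDistinctFactors_apply]; exact (List.card_toFinset _).symm
  have h2 : cardDistinctFactors b = b.primeFactors.card := by
    rw [cardDistinctFactors_apply]; exact (List.card_toFinset _).symm
  rw [h1, h2]
  exact Finset.card_le_card this

/-- **Möbius inversion under Wintner's condition.**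
If `(cₙ)` satisfies `∑ 2^{v(n)}·|cₙ| < ∞`, where `v(n)` is the number of distinct
prime divisors of `n`, and `bₙ = ∑_{k=1}^∞ c_{k·n}`, then for every `n ≥ 1` the
series `∑_{k=1}^∞ μ(k)·b_{k·n}` converges and equals `cₙ`. -/
theorem moebius_inversion_of_summable_two_pow_cardDistinctFactors
    (c b : ℕ → ℂ)
    (hc : Summable fun n : ℕ =>
      (2 : ℝ) ^ (cardDistinctFactors (n + 1)) * ‖c (n + 1)‖)
    (hb : ∀ n : ℕ, 1 ≤ n → HasSum (fun k : ℕ => c ((k + 1) * n)) (b n)) :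
    ∀ n : ℕ, 1 ≤ n →
      Tendsto (fun N : ℕ => ∑ k ∈ Finset.Icc 1 N, (moebius k : ℂ) * b (k * n))
        atTop (nhds (c n)) := by
  intro n hn
  have hn0 : n ≠ 0 := Nat.one_le_iff_ne_zero.mp hn
  -- the partial sums as tsums over j
  set F : ℕ → ℕ → ℂ := fun N j =>
    (∑ k ∈ (Finset.Icc 1 N).filter (· ∣ (j+1)), ((moebius k : ℤ) : ℂ)) * c ((j+1)*n) with hF
  have key : ∀ N : ℕ, HasSum (F N) (∑ k ∈ Finset.Icc 1 N, (moebius k : ℂ) * b (k * n)) := by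
    intro N
    have hterm : ∀ k ∈ Finset.Icc 1 N,
        HasSum (fun j : ℕ => if k ∣ (j+1) then ((moebius k : ℤ):ℂ) * c ((j+1)*n) else 0)
          (((moebius k : ℤ):ℂ) * b (k*n)) := by
      intro k hk
      rw [Finset.mem_Icc] at hk
      have hk1 : 1 ≤ k := hk.1
      have hkn : 1 ≤ k * n := Nat.one_le_iff_ne_zero.mpr (Nat.mul_ne_zero (by omega) hn0)
      have h1 : HasSum (fun m : ℕ => ((moebius k : ℤ):ℂ) * c ((m+1)*(k*n)))
          (((moebius k : ℤ):ℂ) * b (k*n)) := (hb (k*n) hkn).mul_left _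
      set e : ℕ → ℕ := fun m => (m+1)*k - 1 with he
      have hinj : Function.Injective e := by
        intro a a' h
        simp only [he] at h
        have ha : 1 ≤ (a+1)*k := Nat.one_le_iff_ne_zero.mpr (Nat.mul_ne_zero (by omega) (by omega))
        have ha' : 1 ≤ (a'+1)*k := Nat.one_le_iff_ne_zero.mpr (Nat.mul_ne_zero (by omega) (by omega))
        have : (a+1)*k = (a'+1)*k := by omega
        have := Nat.eq_of_mul_eq_mul_right (by omega : 0 < k) this
        omega
      have hvanish : ∀ j ∉ Set.range e,
          (if k ∣ (j+1) then ((moebius k : ℤ):ℂ) * c ((j+1)*n) else 0) = 0 := by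
        intro j hj
        rw [if_neg]
        intro hdvd
        obtain ⟨t, ht⟩ := hdvd
        have ht1 : 1 ≤ t := by
          rcases Nat.eq_zero_or_pos t with h0 | h0
          · subst h0; omega
          · exact h0
        refine hj ⟨t - 1, ?_⟩
        simp only [he]
        have h3 : t - 1 + 1 = t := by omega
        rw [h3, Nat.mul_comm t k]
        omega
      have hfe : (fun j : ℕ => if k ∣ (j+1) then ((moebius k : ℤ):ℂ) * c ((j+1)*n) else 0) ∘ e
          = fun m : ℕ => ((moebius k : ℤ):ℂ) * c ((m+1)*(k*n)) := by
        funext m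
        have hpos : 1 ≤ (m+1)*k := Nat.one_le_iff_ne_zero.mpr
          (Nat.mul_ne_zero (by omega) (by omega))
        have h2 : k ∣ (e m + 1) := by
          simp only [he]
          rw [Nat.sub_add_cancel hpos]
          exact ⟨m+1, Nat.mul_comm (m+1) k⟩
        rw [Function.comp_apply, if_pos h2]
        congr 2
        simp only [he]
        rw [Nat.sub_add_cancel hpos, Nat.mul_assoc]
      rw [← Function.Injective.hasSum_iff hinj hvanish, hfe]
      exact h1
    have := hasSum_sum hterm
    convert this using 1
    funext j
    rw [hF]
    simp only [Finset.sum_filter, Finset.sum_mul, ite_mul, zero_mul]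
  -- the limit function
  set G : ℕ → ℂ := fun j => if j = 0 then c n else 0 with hG
  set bound : ℕ → ℝ := fun j =>
    (2:ℝ) ^ (cardDistinctFactors ((j+1)*n)) * ‖c ((j+1)*n)‖ with hbound
  have hsum_bound : Summable bound := by
    have hinj : Function.Injective (fun j : ℕ => (j+1)*n - 1) := by
      intro a a' h
      simp only at h
      have ha : 1 ≤ (a+1)*n := Nat.one_le_iff_ne_zero.mpr (Nat.mul_ne_zero (by omega) hn0)
      have ha' : 1 ≤ (a'+1)*n := Nat.one_le_iff_ne_zero.mpr (Nat.mul_ne_zero (by omega) hn0)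
      have : (a+1)*n = (a'+1)*n := by omega
      have := Nat.eq_of_mul_eq_mul_right (Nat.pos_of_ne_zero hn0) this
      omega
    have := hc.comp_injective hinj
    refine this.congr fun j => ?_
    simp only [Function.comp_apply, hbound]
    have h1 : 1 ≤ (j+1)*n := Nat.one_le_iff_ne_zero.mpr (Nat.mul_ne_zero (by omega) hn0)
    rw [Nat.sub_add_cancel h1]
  have h_bound : ∀ N j, ‖F N j‖ ≤ bound j := by
    intro N j
    rw [hF, hbound]
    simp only
    rw [norm_mul]
    have h1 : ‖∑ k ∈ (Finset.Icc 1 N).filter (· ∣ (j+1)), ((moebius k : ℤ):ℂ)‖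
        ≤ (2:ℝ) ^ (cardDistinctFactors (j+1)) := by
      calc ‖∑ k ∈ (Finset.Icc 1 N).filter (· ∣ (j+1)), ((moebius k : ℤ):ℂ)‖
          ≤ ∑ k ∈ (Finset.Icc 1 N).filter (· ∣ (j+1)), ‖((moebius k : ℤ):ℂ)‖ :=
            norm_sum_le _ _
        _ ≤ ∑ k ∈ (j+1).divisors, ‖((moebius k : ℤ):ℂ)‖ :=
            Finset.sum_le_sum_of_subset_of_nonneg
              (aux_filter_subset (j+1) N (by omega)) (fun _ _ _ => norm_nonneg _)
        _ = 2 ^ (cardDistinctFactors (j+1)) := aux_card (j+1) (by omega)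
    have h2 : (2:ℝ) ^ (cardDistinctFactors (j+1)) ≤ (2:ℝ) ^ (cardDistinctFactors ((j+1)*n)) := by
      apply pow_le_pow_right₀ one_le_two
      exact aux_omega_mono (Dvd.intro n rfl) (Nat.mul_ne_zero (by omega) hn0)
    have h3 : ‖c ((j+1)*n)‖ = ‖c ((j+1)*n)‖ := rfl
    rw [h3]
    exact mul_le_mul (h1.trans h2) le_rfl (norm_nonneg _) (by positivity)
  have h_lim : ∀ j, Tendsto (fun N => F N j) atTop (nhds (G j)) := by
    intro j
    have hev : ∀ᶠ N in atTop, F N j = G j := by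
      filter_upwards [eventually_ge_atTop (j+1)] with N hN
      rw [hF, hG]
      simp only
      rw [aux_filter_eq (j+1) N (by omega) hN, aux_sum_moebius]
      rcases Nat.eq_zero_or_pos j with h0 | h0
      · subst h0; simp
      · rw [if_neg (by omega), if_neg (by omega), zero_mul]
    exact Tendsto.congr' (hev.mono fun N h => h.symm) tendsto_const_nhds
  have hGsum : ∑' j, G j = c n := by
    rw [hG]
    exact tsum_ite_eq 0 (fun _ => c n)
  have hmain := tendsto_tsum_of_dominated_convergence hsum_bound h_lim
    (Eventually.of_forall h_bound)
  rw [hGsum] at hmain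
  refine hmain.congr fun N => ?_
  exact ((key N).tsum_eq)
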